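/- arXiv:1708.07381 — 3 statements merged into one kernel-verified Lean document; each statement's English description precedes it below -/
import Mathlib

section
/- Let (X, dist) be a metric space, let N be a finite nonempty set of points of X, let s, l ∈ X, and let c* be any element of N. Then ∑_{c∈N} dist(c,l)² ≤ 3·∑_{c∈N} dist(c,s)² + 3·|N|·(dist(c*,s)² + dist(c*,l)²). -/
/-- Per-facility reassignment bound: the cost of rerouting all clients of `N`
to `l` is controlled by their cost at `s` plus `|N|` times the combined
squared distance of a witness client `cstar ∈ N` to `s` and to `l`. -/
theorem stmt_0 {X : Type*} [MetricSpace X] (N : Finset X) (s l cstar : X)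
    (hstar : cstar ∈ N) :
    ∑ c ∈ N, dist c l ^ 2 ≤
      3 * ∑ c ∈ N, dist c s ^ 2 +
        3 * (N.card : ℝ) * (dist cstar s ^ 2 + dist cstar l ^ 2) := by
  have key : ∀ c ∈ N, dist c l ^ 2 ≤
      3 * dist c s ^ 2 + 3 * (dist cstar s ^ 2 + dist cstar l ^ 2) := by
    intro c _
    have h1 : dist c l ≤ dist c s + dist s cstar + dist cstar l := by
      calc dist c l ≤ dist c cstar + dist cstar l := dist_triangle _ _ _
        _ ≤ (dist c s + dist s cstar) + dist cstar l := by
            gcongr; exact dist_triangle _ _ _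
    have h2 : dist c l ^ 2 ≤ (dist c s + dist s cstar + dist cstar l) ^ 2 := by
      apply sq_le_sq' <;> nlinarith [dist_nonneg (x := c) (y := l),
        dist_nonneg (x := c) (y := s), dist_nonneg (x := s) (y := cstar),
        dist_nonneg (x := cstar) (y := l)]
    rw [dist_comm s cstar] at h2
    nlinarith [sq_nonneg (dist c s - dist cstar s),
      sq_nonneg (dist c s - dist cstar l), sq_nonneg (dist cstar s - dist cstar l)]
  calc ∑ c ∈ N, dist c l ^ 2
      ≤ ∑ c ∈ N, (3 * dist c s ^ 2 + 3 * (dist cstar s ^ 2 + dist cstar l ^ 2)) :=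
        Finset.sum_le_sum key
    _ = 3 * ∑ c ∈ N, dist c s ^ 2 +
        3 * (N.card : ℝ) * (dist cstar s ^ 2 + dist cstar l ^ 2) := by
        rw [Finset.sum_add_distrib, Finset.sum_const, ← Finset.mul_sum]
        push_cast; ring
end

section
/- Let (X, dist) be a metric space, let f₀, ℓ₀ ∈ X, let V and W be finite sets of points of X with V ∩ W nonempty, and let ε > 0. Then ∑_{c ∈ V \ W} dist(c, ℓ₀)² ≤ (1+ε)² · ∑_{c ∈ V \ W} dist(c, f₀)² + (1+ε⁻¹)² · (|V \ W| / |V ∩ W|) · 3 · ∑_{c₁ ∈ V ∩ W} (dist(c₁, f₀)² + dist(c₁, ℓ₀)²). -/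
open Finset

/-- Main displayed inequality in the lemma on 1-1 isolated pairs: the cost of
rerouting the clients of `V \ W` from `f₀` to `ℓ₀` is bounded via the relaxed
triangle inequality and averaging over `V ∩ W`. -/
theorem stmt_5 {X : Type*} [MetricSpace X] [DecidableEq X]
    (V W : Finset X) (hVW : (V ∩ W).Nonempty) (f₀ ℓ₀ : X)
    (ε : ℝ) (hε : 0 < ε) :
    ∑ c ∈ V \ W, dist c ℓ₀ ^ 2 ≤
      (1 + ε) ^ 2 * ∑ c ∈ V \ W, dist c f₀ ^ 2 +
        (1 + ε⁻¹) ^ 2 * (((V \ W).card : ℝ) / ((V ∩ W).card : ℝ)) * 3 *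
          ∑ c₁ ∈ V ∩ W, (dist c₁ f₀ ^ 2 + dist c₁ ℓ₀ ^ 2) := by
  set D : ℝ := dist ℓ₀ f₀ with hD
  have hεinv : (0:ℝ) < ε⁻¹ := inv_pos.mpr hε
  have hεε : ε * ε⁻¹ = 1 := mul_inv_cancel₀ hε.ne'
  have hn : (0:ℝ) < ((V ∩ W).card : ℝ) := by
    exact_mod_cast card_pos.mpr hVW
  set S : ℝ := ∑ c₁ ∈ V ∩ W, (dist c₁ f₀ ^ 2 + dist c₁ ℓ₀ ^ 2) with hS
  -- averaging bound: D^2 ≤ 3/n * S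
  have havg : D ^ 2 ≤ 3 / ((V ∩ W).card : ℝ) * S := by
    have h1 : ((V ∩ W).card : ℝ) * D ^ 2 ≤ 3 * S := by
      have : ∑ c₁ ∈ V ∩ W, D ^ 2 ≤ ∑ c₁ ∈ V ∩ W, 3 * (dist c₁ f₀ ^ 2 + dist c₁ ℓ₀ ^ 2) := by
        apply Finset.sum_le_sum
        intro c₁ _
        have ht : D ≤ dist c₁ ℓ₀ + dist c₁ f₀ := by
          rw [hD, dist_comm c₁ ℓ₀]
          exact dist_triangle ℓ₀ c₁ f₀
        have h0 : 0 ≤ D := dist_nonneg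
        nlinarith [sq_nonneg (dist c₁ ℓ₀ - dist c₁ f₀), sq_nonneg (dist c₁ ℓ₀ + dist c₁ f₀), dist_nonneg (x := c₁) (y := ℓ₀), dist_nonneg (x := c₁) (y := f₀)]
      simpa [Finset.sum_const, Finset.mul_sum, hS, mul_comm] using this
    rw [div_mul_eq_mul_div, le_div_iff₀ hn]
    nlinarith
  -- pointwise relaxed triangle inequality
  have hpt : ∀ c ∈ V \ W, dist c ℓ₀ ^ 2 ≤ (1 + ε) ^ 2 * dist c f₀ ^ 2 + (1 + ε⁻¹) ^ 2 * D ^ 2 := by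
    intro c _
    have ht : dist c ℓ₀ ≤ dist c f₀ + D := by
      rw [hD, dist_comm ℓ₀ f₀]
      exact dist_triangle c f₀ ℓ₀
    have h0 : 0 ≤ dist c ℓ₀ := dist_nonneg
    have ha : 0 ≤ dist c f₀ := dist_nonneg
    have hb : (0:ℝ) ≤ D := dist_nonneg
    have key : ε * dist c f₀ ^ 2 + ε⁻¹ * D ^ 2 - 2 * dist c f₀ * D
        = ε⁻¹ * (ε * dist c f₀ - D) ^ 2 := by
      field_simp
      ring
    have h2ab : 2 * dist c f₀ * D ≤ ε * dist c f₀ ^ 2 + ε⁻¹ * D ^ 2 := by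
      nlinarith [mul_nonneg hεinv.le (sq_nonneg (ε * dist c f₀ - D))]
    have hsq : dist c ℓ₀ ^ 2 ≤ (dist c f₀ + D) ^ 2 := by nlinarith
    nlinarith [h2ab, hsq,
      mul_nonneg hε.le (mul_nonneg (by linarith : (0:ℝ) ≤ 1 + ε) (sq_nonneg (dist c f₀))),
      mul_nonneg hεinv.le (mul_nonneg (by linarith : (0:ℝ) ≤ 1 + ε⁻¹) (sq_nonneg D))]
  have hsum : ∑ c ∈ V \ W, dist c ℓ₀ ^ 2 ≤
      ∑ c ∈ V \ W, ((1 + ε) ^ 2 * dist c f₀ ^ 2 + (1 + ε⁻¹) ^ 2 * D ^ 2) :=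
    Finset.sum_le_sum hpt
  have hexp : ∑ c ∈ V \ W, ((1 + ε) ^ 2 * dist c f₀ ^ 2 + (1 + ε⁻¹) ^ 2 * D ^ 2)
      = (1 + ε) ^ 2 * ∑ c ∈ V \ W, dist c f₀ ^ 2 + ((V \ W).card : ℝ) * ((1 + ε⁻¹) ^ 2 * D ^ 2) := by
    rw [Finset.sum_add_distrib, Finset.mul_sum, Finset.sum_const, nsmul_eq_mul]
  have hfinal : ((V \ W).card : ℝ) * ((1 + ε⁻¹) ^ 2 * D ^ 2) ≤
      (1 + ε⁻¹) ^ 2 * (((V \ W).card : ℝ) / ((V ∩ W).card : ℝ)) * 3 * S := by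
    have hm : (0:ℝ) ≤ ((V \ W).card : ℝ) := Nat.cast_nonneg _
    have hc : (0:ℝ) ≤ (1 + ε⁻¹) ^ 2 := sq_nonneg _
    have := mul_le_mul_of_nonneg_left havg (mul_nonneg hm hc)
    calc ((V \ W).card : ℝ) * ((1 + ε⁻¹) ^ 2 * D ^ 2)
        = ((V \ W).card : ℝ) * (1 + ε⁻¹) ^ 2 * D ^ 2 := by ring
      _ ≤ ((V \ W).card : ℝ) * (1 + ε⁻¹) ^ 2 * (3 / ((V ∩ W).card : ℝ) * S) := this
      _ = (1 + ε⁻¹) ^ 2 * (((V \ W).card : ℝ) / ((V ∩ W).card : ℝ)) * 3 * S := by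
          field_simp
  linarith [hsum, hexp ▸ hsum]
end

section
/- Let L > 0 be a real number, m ∈ ℕ, 0 ≤ γ ≤ 1/2, and p ∈ ℝ. For each integer 0 ≤ i ≤ m, say that a shift a ∈ ℝ puts p in the level-i moat if there exists j ∈ ℤ with |p − (a + j·L/2^i)| < γ·L/2^i, i.e., p is at distance less than γ·L/2^i from the shifted grid a + (L/2^i)·ℤ of level-i lines. Then the Lebesgue measure of the set of shifts a ∈ [0, L) for which there exists some 0 ≤ i ≤ m putting p in the level-i moat is at most 2γ·(m+1)·L. Consequently, if a is chosen uniformly at random in [0, L), the probability that p is a γ-moat point (i.e., lies in the level-i moat for some 0 ≤ i ≤ m) is at most 2γ·(m+1). -/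
open MeasureTheory

lemma moat_level (L : ℝ) (hL : 0 < L) (γ : ℝ) (hγ0 : 0 ≤ γ) (hγ : γ ≤ 1 / 2)
    (p : ℝ) (n : ℕ) (s : ℝ) (hs : 0 < s) (hLs : L = 2 ^ n * s) :
    volume ((⋃ j : ℤ, Set.Ioo (p - (j : ℝ) * s - γ * s) (p - (j : ℝ) * s + γ * s))
        ∩ Set.Ico 0 L) ≤ ENNReal.ofReal (2 * γ * L) := by
  set S : Set ℝ := ⋃ j : ℤ, Set.Ioo (p - (j : ℝ) * s - γ * s) (p - (j : ℝ) * s + γ * s) with hS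
  have hSmeas : MeasurableSet S := MeasurableSet.iUnion fun j => measurableSet_Ioo
  have hγs : γ * s ≤ s / 2 := by nlinarith
  -- periodicity of S under translation by multiples of L
  have hinv : ∀ g : AddSubgroup.zmultiples L, (fun x => g +ᵥ x) ⁻¹' S = S := by
    rintro ⟨g, k, rfl⟩
    ext x
    have hkL : (k • L : ℝ) = (k : ℝ) * ((2 : ℝ) ^ n * s) := by rw [zsmul_eq_mul, hLs]
    simp only [Set.mem_preimage, hS, Set.mem_iUnion, Set.mem_Ioo,
      AddSubgroup.vadd_def, vadd_eq_add, AddSubgroup.coe_mk, hkL]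
    constructor
    · rintro ⟨j, h1, h2⟩
      refine ⟨j + k * 2 ^ n, ?_, ?_⟩ <;>
      · push_cast
        nlinarith [h1, h2]
    · rintro ⟨j, h1, h2⟩
      refine ⟨j - k * 2 ^ n, ?_, ?_⟩ <;>
      · push_cast
        nlinarith [h1, h2]
  -- replace the window [0, L) by (p - γs, p - γs + L]
  have h1 : volume (S ∩ Set.Ico 0 L) ≤ volume (S ∩ Set.Ioc 0 L) := by
    have hsub : S ∩ Set.Ico 0 L ⊆ (S ∩ Set.Ioc 0 L) ∪ {0} := by
      rintro a ⟨haS, h0, hL'⟩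
      rcases eq_or_lt_of_le h0 with h | h
      · exact Or.inr (by simp [← h])
      · exact Or.inl ⟨haS, h, le_of_lt hL'⟩
    calc volume (S ∩ Set.Ico 0 L) ≤ volume ((S ∩ Set.Ioc 0 L) ∪ {0}) := measure_mono hsub
      _ ≤ volume (S ∩ Set.Ioc 0 L) + volume ({0} : Set ℝ) := measure_union_le _ _
      _ = volume (S ∩ Set.Ioc 0 L) := by simp
  have h2 : volume (S ∩ Set.Ioc 0 L) = volume (S ∩ Set.Ioc (p - γ * s) (p - γ * s + L)) := by
    have hfd0 : IsAddFundamentalDomain (AddSubgroup.zmultiples L) (Set.Ioc (0 : ℝ) L) volume := by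
      simpa using isAddFundamentalDomain_Ioc hL 0
    exact IsAddFundamentalDomain.measure_set_eq hfd0
      (isAddFundamentalDomain_Ioc hL (p - γ * s)) hSmeas hinv
  -- within the shifted window, S is covered by `2^n` intervals, one per grid point
  have h3 : S ∩ Set.Ioc (p - γ * s) (p - γ * s + L) ⊆
      ⋃ k ∈ Finset.range (2 ^ n),
        Set.Ioo (p + (k : ℝ) * s - γ * s) (p + (k : ℝ) * s + γ * s) := by
    rintro a ⟨haS, ha1, ha2⟩
    simp only [hS, Set.mem_iUnion, Set.mem_Ioo] at haS
    obtain ⟨j, hj1, hj2⟩ := haS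
    have hj0 : j ≤ 0 := by
      by_contra h
      push_neg at h
      have : (1 : ℝ) ≤ (j : ℝ) := by exact_mod_cast h
      nlinarith
    have hjn : -j < (2 ^ n : ℤ) := by
      have : (-j : ℝ) * s < (2 : ℝ) ^ n * s := by nlinarith [hj1, ha2]
      have := lt_of_mul_lt_mul_right this hs.le
      exact_mod_cast this
    refine Set.mem_biUnion (x := (-j).toNat) (Finset.mem_range.2 ?_) ?_
    · have h0 : (0 : ℤ) ≤ -j := by omega
      zify [Int.toNat_of_nonneg h0]
      omega
    · have h0 : (0 : ℤ) ≤ -j := by omega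
      have hcast : (((-j).toNat : ℝ)) = -(j : ℝ) := by
        rw [← Int.cast_natCast, Int.toNat_of_nonneg h0]; push_cast; ring
      constructor
      · rw [hcast]; linarith [hj1]
      · rw [hcast]; linarith [hj2]
  have h4 : volume (⋃ k ∈ Finset.range (2 ^ n),
      Set.Ioo (p + (k : ℝ) * s - γ * s) (p + (k : ℝ) * s + γ * s)) ≤
      ENNReal.ofReal (2 * γ * L) := by
    calc volume (⋃ k ∈ Finset.range (2 ^ n),
          Set.Ioo (p + (k : ℝ) * s - γ * s) (p + (k : ℝ) * s + γ * s))
        ≤ ∑ k ∈ Finset.range (2 ^ n),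
            volume (Set.Ioo (p + (k : ℝ) * s - γ * s) (p + (k : ℝ) * s + γ * s)) :=
          measure_biUnion_finset_le _ _
      _ = ∑ k ∈ Finset.range (2 ^ n), ENNReal.ofReal (2 * (γ * s)) := by
          refine Finset.sum_congr rfl fun k _ => ?_
          rw [Real.volume_Ioo]; congr 1; ring
      _ = (2 ^ n : ℕ) • ENNReal.ofReal (2 * (γ * s)) := by
          rw [Finset.sum_const, Finset.card_range]
      _ = ENNReal.ofReal ((2 ^ n : ℕ) * (2 * (γ * s))) := by
          rw [nsmul_eq_mul, ← ENNReal.ofReal_natCast,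
            ← ENNReal.ofReal_mul (by positivity)]
      _ = ENNReal.ofReal (2 * γ * L) := by
          congr 1; push_cast; rw [hLs]; ring
  calc volume (S ∩ Set.Ico 0 L) ≤ volume (S ∩ Set.Ioc 0 L) := h1
    _ = volume (S ∩ Set.Ioc (p - γ * s) (p - γ * s + L)) := h2
    _ ≤ volume (⋃ k ∈ Finset.range (2 ^ n),
          Set.Ioo (p + (k : ℝ) * s - γ * s) (p + (k : ℝ) * s + γ * s)) := measure_mono h3
    _ ≤ ENNReal.ofReal (2 * γ * L) := h4

/-- Moat-probability bound (one-dimensional): for a point `p`, the Lebesgue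
measure of the set of shifts `a ∈ [0, L)` such that, for some level `i ≤ m`,
`p` is within distance `γ·L/2^i` of the shifted grid `a + (L/2^i)·ℤ` is at
most `2γ·(m+1)·L`. Hence a uniformly random shift makes `p` a γ-moat point
with probability at most `2γ·(m+1)`. -/
theorem stmt_7 (L : ℝ) (hL : 0 < L) (m : ℕ) (γ : ℝ)
    (hγ0 : 0 ≤ γ) (hγ : γ ≤ 1 / 2) (p : ℝ) :
    volume {a : ℝ | a ∈ Set.Ico 0 L ∧
        ∃ i ≤ m, ∃ j : ℤ, |p - (a + (j : ℝ) * (L / 2 ^ i))| < γ * (L / 2 ^ i)} ≤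
      ENNReal.ofReal (2 * γ * (m + 1) * L) := by
  set T := {a : ℝ | a ∈ Set.Ico 0 L ∧
      ∃ i ≤ m, ∃ j : ℤ, |p - (a + (j : ℝ) * (L / 2 ^ i))| < γ * (L / 2 ^ i)}
  have hsub : T ⊆ ⋃ i ∈ Finset.range (m + 1),
      ((⋃ j : ℤ, Set.Ioo (p - (j : ℝ) * (L / 2 ^ i) - γ * (L / 2 ^ i))
          (p - (j : ℝ) * (L / 2 ^ i) + γ * (L / 2 ^ i))) ∩ Set.Ico 0 L) := by
    rintro a ⟨ha, i, hi, j, hj⟩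
    rw [abs_lt] at hj
    refine Set.mem_biUnion (Finset.mem_range.2 (Nat.lt_succ_of_le hi)) ?_
    exact ⟨Set.mem_iUnion.2 ⟨j, by constructor <;> [linarith [hj.2]; linarith [hj.1]]⟩, ha⟩
  calc volume T
      ≤ volume (⋃ i ∈ Finset.range (m + 1),
          ((⋃ j : ℤ, Set.Ioo (p - (j : ℝ) * (L / 2 ^ i) - γ * (L / 2 ^ i))
              (p - (j : ℝ) * (L / 2 ^ i) + γ * (L / 2 ^ i))) ∩ Set.Ico 0 L)) :=
        measure_mono hsub
    _ ≤ ∑ i ∈ Finset.range (m + 1),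
          volume ((⋃ j : ℤ, Set.Ioo (p - (j : ℝ) * (L / 2 ^ i) - γ * (L / 2 ^ i))
              (p - (j : ℝ) * (L / 2 ^ i) + γ * (L / 2 ^ i))) ∩ Set.Ico 0 L) :=
        measure_biUnion_finset_le _ _
    _ ≤ ∑ i ∈ Finset.range (m + 1), ENNReal.ofReal (2 * γ * L) := by
        refine Finset.sum_le_sum fun i _ => ?_
        exact moat_level L hL γ hγ0 hγ p i (L / 2 ^ i) (by positivity)
          (by field_simp)
    _ = (m + 1 : ℕ) • ENNReal.ofReal (2 * γ * L) := by
        rw [Finset.sum_const, Finset.card_range]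
    _ = ENNReal.ofReal (2 * γ * (m + 1) * L) := by
        rw [nsmul_eq_mul, ← ENNReal.ofReal_natCast, ← ENNReal.ofReal_mul (by positivity)]
        congr 1; push_cast; ring
end
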